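/- Consider the consistent sequence $V_n = \mathbb{R}^{2^n}$ with embeddings $\varphi_n(x) = x \otimes \mathbb{1}_2$ (i.e., each coordinate is repeated twice), normalized inner product $\langle x,y \rangle = 2^{-n} x^\top y$, and the action of the cyclic groups $G_n = \mathsf{C}_{2^n}$ (cyclic shifts), with $G_n$ embedded in $G_{n+1}$ by sending a shift matrix $g$ to $g \otimes I_2$. Then this consistent sequence is not finitely generated: for every $n$, the vector $\mathbb{1}_{2^n} \otimes [1,-1]^\top \in V_{n+1}$ is orthogonal to $\mathrm{span}\{g \cdot \varphi_n(v) : g \in G_{n+1}, v \in V_n\}$, so $\mathrm{span}\{G_{n+1} \cdot \varphi_n(V_n)\} \neq V_{n+1}$. -/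

import Mathlib

def padTo (d n : ℕ) (hdn : d ≤ n) (x : Fin (2 ^ d) → ℝ) : Fin (2 ^ n) → ℝ :=
  fun i => x ⟨i.val / 2 ^ (n - d), by
    have h1 : (2 : ℕ) ^ n = 2 ^ (n - d) * 2 ^ d := by
      rw [← pow_add, Nat.sub_add_cancel hdn]
    have h2 : (i : ℕ) < 2 ^ (n - d) * 2 ^ d := h1 ▸ i.isLt
    exact Nat.div_lt_of_lt_mul h2⟩

def cycShift (m : ℕ) (hm : 0 < m) (k : ℕ) (v : Fin m → ℝ) : Fin m → ℝ :=
  fun i => v ⟨(i.val + k) % m, Nat.mod_lt _ hm⟩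

lemma aux1 (M : ℕ) (X : ℕ → ℝ) :
    ∑ j ∈ Finset.range (2 * M), (-1 : ℝ) ^ j * X (j / 2) = 0 := by
  induction M with
  | zero => simp
  | succ M ih =>
    have h : 2 * (M + 1) = (2 * M) + 1 + 1 := by ring
    rw [h, Finset.sum_range_succ, Finset.sum_range_succ, ih]
    have h1 : (2 * M + 1) / 2 = M := by omega
    have h2 : (2 * M) / 2 = M := by omega
    rw [h1, h2, pow_succ]
    ring

lemma sum_shift (m : ℕ) (hm : 0 < m) (hme : 2 ∣ m) (k : ℕ) (w : Fin m → ℝ)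
    (h0 : ∑ j : Fin m, (-1 : ℝ) ^ (j : ℕ) * w j = 0) :
    ∑ i : Fin m, (-1 : ℝ) ^ (i : ℕ) * w ⟨(i.val + k) % m, Nat.mod_lt _ hm⟩ = 0 := by
  haveI : NeZero m := ⟨hm.ne'⟩
  set c : Fin m := ⟨k % m, Nat.mod_lt _ hm⟩ with hc
  have heq : ∀ i : Fin m, (⟨(i.val + k) % m, Nat.mod_lt _ hm⟩ : Fin m) = i + c := by
    intro i
    ext
    rw [Fin.val_add]
    simp [hc, Nat.add_mod_mod]
  have hpar : ∀ i : Fin m, (-1 : ℝ) ^ (i : ℕ) = (-1) ^ k * (-1) ^ ((i + c : Fin m) : ℕ) := by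
    intro i
    have hv : ((i + c : Fin m) : ℕ) = (i.val + k) % m := by
      rw [Fin.val_add]; simp [hc, Nat.add_mod_mod]
    rw [hv, neg_one_pow_eq_pow_mod_two ((i.val + k) % m), Nat.mod_mod_of_dvd _ hme,
      ← neg_one_pow_eq_pow_mod_two, pow_add]
    have hk : (-1 : ℝ) ^ k * (-1) ^ k = 1 := by
      rw [← pow_add]; exact Even.neg_one_pow ⟨k, rfl⟩
    linear_combination (-(-1 : ℝ) ^ (i : ℕ)) * hk
  calc ∑ i : Fin m, (-1 : ℝ) ^ (i : ℕ) * w ⟨(i.val + k) % m, Nat.mod_lt _ hm⟩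
      = ∑ i : Fin m, (-1 : ℝ) ^ k * ((-1) ^ ((i + c : Fin m) : ℕ) * w (i + c)) := by
        refine Finset.sum_congr rfl fun i _ => ?_
        rw [heq i, hpar i]; ring
    _ = (-1 : ℝ) ^ k * ∑ i : Fin m, ((-1 : ℝ) ^ ((i + c : Fin m) : ℕ) * w (i + c)) := by
        rw [Finset.mul_sum]
    _ = (-1 : ℝ) ^ k * ∑ j : Fin m, ((-1 : ℝ) ^ (j : ℕ) * w j) := by
        congr 1
        exact Equiv.sum_comp (Equiv.addRight c) (fun j => (-1 : ℝ) ^ (j : ℕ) * w j)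
    _ = 0 := by rw [h0, mul_zero]

lemma base_sum (n : ℕ) (x : Fin (2 ^ n) → ℝ) :
    ∑ j : Fin (2 ^ (n + 1)), (-1 : ℝ) ^ (j : ℕ) * padTo n (n + 1) (Nat.le_succ n) x j = 0 := by
  set X : ℕ → ℝ := fun a => if h : a < 2 ^ n then x ⟨a, h⟩ else 0 with hX
  have hw : ∀ j : Fin (2 ^ (n + 1)),
      padTo n (n + 1) (Nat.le_succ n) x j = X (j.val / 2) := by
    intro j
    have h1 : n + 1 - n = 1 := by omega
    have hlt : j.val / 2 < 2 ^ n := by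
      have := j.isLt
      have h2 : (2 : ℕ) ^ (n + 1) = 2 ^ n * 2 := pow_succ 2 n
      omega
    simp only [padTo, h1, pow_one, hX, hlt, dif_pos]
  have : ∑ j : Fin (2 ^ (n + 1)), (-1 : ℝ) ^ (j : ℕ) * padTo n (n + 1) (Nat.le_succ n) x j
      = ∑ j ∈ Finset.range (2 * 2 ^ n), (-1 : ℝ) ^ j * X (j / 2) := by
    rw [show 2 * 2 ^ n = 2 ^ (n + 1) by rw [pow_succ]; ring,
      ← Fin.sum_univ_eq_sum_range (fun j => (-1 : ℝ) ^ j * X (j / 2))]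
    exact Finset.sum_congr rfl fun j _ => by rw [hw j]
  rw [this, aux1]

def altFunctional (m : ℕ) : (Fin m → ℝ) →ₗ[ℝ] ℝ where
  toFun y := ∑ i : Fin m, (-1 : ℝ) ^ (i : ℕ) * y i
  map_add' a b := by simp [mul_add, Finset.sum_add_distrib]
  map_smul' c a := by
    simp only [Pi.smul_apply, smul_eq_mul, RingHom.id_apply, Finset.mul_sum]
    exact Finset.sum_congr rfl fun i _ => by ring

theorem cyclic_sequence_not_finitely_generated :
    (∀ (n : ℕ) (k : ℕ) (x : Fin (2 ^ n) → ℝ),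
      ∑ i : Fin (2 ^ (n + 1)), (-1 : ℝ) ^ (i : ℕ) *
        cycShift (2 ^ (n + 1)) (by positivity) k (padTo n (n + 1) (by omega) x) i = 0) ∧
    (∀ n : ℕ,
      Submodule.span ℝ {y : Fin (2 ^ (n + 1)) → ℝ |
          ∃ (k : ℕ) (x : Fin (2 ^ n) → ℝ),
            y = cycShift (2 ^ (n + 1)) (by positivity) k (padTo n (n + 1) (by omega) x)}
        ≠ ⊤) ∧
    (∀ d : ℕ, ¬ (∀ n, ∀ hdn : d ≤ n,
      Submodule.span ℝ {y : Fin (2 ^ n) → ℝ |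
          ∃ (k : ℕ) (x : Fin (2 ^ d) → ℝ),
            y = cycShift (2 ^ n) (by positivity) k (padTo d n hdn x)}
        = ⊤)) := by
  have part1 : ∀ (n : ℕ) (k : ℕ) (x : Fin (2 ^ n) → ℝ),
      ∑ i : Fin (2 ^ (n + 1)), (-1 : ℝ) ^ (i : ℕ) *
        cycShift (2 ^ (n + 1)) (by positivity) k (padTo n (n + 1) (by omega) x) i = 0 := by
    intro n k x
    exact sum_shift (2 ^ (n + 1)) (by positivity) ⟨2 ^ n, by rw [pow_succ]; ring⟩ k
      (padTo n (n + 1) (by omega) x) (base_sum n x)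
  have part2 : ∀ n : ℕ,
      Submodule.span ℝ {y : Fin (2 ^ (n + 1)) → ℝ |
          ∃ (k : ℕ) (x : Fin (2 ^ n) → ℝ),
            y = cycShift (2 ^ (n + 1)) (by positivity) k (padTo n (n + 1) (by omega) x)}
        ≠ ⊤ := by
    intro n hspan
    set f := altFunctional (2 ^ (n + 1)) with hf
    have hsub : {y : Fin (2 ^ (n + 1)) → ℝ |
        ∃ (k : ℕ) (x : Fin (2 ^ n) → ℝ),
          y = cycShift (2 ^ (n + 1)) (by positivity) k (padTo n (n + 1) (by omega) x)}
          ⊆ ↑(LinearMap.ker f) := by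
      rintro y ⟨k, x, rfl⟩
      simp only [SetLike.mem_coe, LinearMap.mem_ker]
      exact part1 n k x
    have hle := Submodule.span_le.mpr hsub
    rw [hspan, top_le_iff] at hle
    have halt : f (fun i => (-1 : ℝ) ^ (i : ℕ)) = 0 := by
      have : (fun i : Fin (2 ^ (n + 1)) => (-1 : ℝ) ^ (i : ℕ)) ∈ LinearMap.ker f := by
        rw [hle]; trivial
      exact LinearMap.mem_ker.mp this
    have hval : f (fun i => (-1 : ℝ) ^ (i : ℕ)) = (2 ^ (n + 1) : ℝ) := by
      have h1 : ∀ i : Fin (2 ^ (n + 1)), (-1 : ℝ) ^ (i : ℕ) * (-1) ^ (i : ℕ) = 1 :=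
        fun i => by rw [← pow_add]; exact Even.neg_one_pow ⟨i, rfl⟩
      show (∑ i : Fin (2 ^ (n + 1)), (-1 : ℝ) ^ (i : ℕ) * (-1) ^ (i : ℕ)) = (2 ^ (n + 1) : ℝ)
      rw [Finset.sum_congr rfl fun i _ => h1 i]
      simp
    rw [halt] at hval
    have hpos : (0 : ℝ) < 2 ^ (n + 1) := by positivity
    linarith
  refine ⟨part1, part2, ?_⟩
  intro d h
  exact part2 d (h (d + 1) (by omega))
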